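/- The number of associative, quasitrivial, and commutative binary operations F : Xₙ × Xₙ → Xₙ on an n-element set Xₙ is exactly n!. -/

import Mathlib

lemma exists_perm_of_linear (n : ℕ) (r : Fin n → Fin n → Prop)
    (hrefl : ∀ x, r x x) (hanti : ∀ x y, r x y → r y x → x = y)
    (htrans : ∀ x y z, r x y → r y z → r x z) (htot : ∀ x y, r x y ∨ r y x) :
    ∃ σ : Equiv.Perm (Fin n), ∀ x y, r x y ↔ σ.symm x ≤ σ.symm y := by
  classical
  set s : Fin n → Fin n → Prop := fun x y => r x y ∧ x ≠ y with hs
  haveI h1 : IsTrichotomous (Fin n) s := ⟨fun x y hnxy hnyx => by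
    by_contra hxy
    rcases htot x y with h | h
    · exact hnxy ⟨h, hxy⟩
    · exact hnyx ⟨h, Ne.symm hxy⟩⟩
  haveI h2 : IsTrans (Fin n) s := ⟨fun x y z hxy hyz => by
    refine ⟨htrans _ _ _ hxy.1 hyz.1, fun hxz => ?_⟩
    exact hyz.2 (hanti _ _ hyz.1 (hxz ▸ hxy.1))⟩
  haveI h3 : IsIrrefl (Fin n) s := ⟨fun x h => h.2 rfl⟩
  haveI : IsStrictTotalOrder (Fin n) s := { }
  letI : DecidableRel s := fun _ _ => Classical.dec _
  letI L : LinearOrder (Fin n) := linearOrderOfSTO s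
  have hle : ∀ x y, (@LE.le _ L.toLE x y) ↔ r x y := by
    intro x y
    show (x = y ∨ s x y) ↔ r x y
    constructor
    · rintro (rfl | h)
      · exact hrefl x
      · exact h.1
    · intro h
      by_cases hxy : x = y
      · exact Or.inl hxy
      · exact Or.inr ⟨h, hxy⟩
  let e := @monoEquivOfFin (Fin n) _ L n (Fintype.card_fin n)
  refine ⟨e.toEquiv, fun x y => ?_⟩
  rw [← hle]
  exact ((RelIso.symm e).map_rel_iff (a := x) (b := y)).symm

theorem stmt_7 (n : ℕ) (hn : 1 ≤ n) :
    Nat.card {F : Fin n → Fin n → Fin n //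
      (∀ x y z, F (F x y) z = F x (F y z)) ∧
      (∀ x y, F x y = x ∨ F x y = y) ∧
      (∀ x y, F x y = F y x)} = Nat.factorial n := by
  classical
  set T := {F : Fin n → Fin n → Fin n //
      (∀ x y z, F (F x y) z = F x (F y z)) ∧
      (∀ x y, F x y = x ∨ F x y = y) ∧
      (∀ x y, F x y = F y x)} with hT
  let Φ : Equiv.Perm (Fin n) → T := fun σ =>
    ⟨fun x y => σ (max (σ.symm x) (σ.symm y)), by
      intro x y z; simp [Equiv.symm_apply_apply, max_assoc], by
      intro x y
      rcases max_cases (σ.symm x) (σ.symm y) with ⟨h, _⟩ | ⟨h, _⟩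
      · exact Or.inl (by show σ (max (σ.symm x) (σ.symm y)) = x; rw [h, Equiv.apply_symm_apply])
      · exact Or.inr (by show σ (max (σ.symm x) (σ.symm y)) = y; rw [h, Equiv.apply_symm_apply]), by
      intro x y
      show σ (max (σ.symm x) (σ.symm y)) = σ (max (σ.symm y) (σ.symm x))
      rw [max_comm]⟩
  have key : ∀ (σ : Equiv.Perm (Fin n)) (x y : Fin n),
      σ.symm x ≤ σ.symm y ↔ (Φ σ).1 x y = y := by
    intro σ x y
    constructor
    · intro h
      show σ (max (σ.symm x) (σ.symm y)) = y
      rw [max_eq_right h, Equiv.apply_symm_apply]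
    · intro h
      have : max (σ.symm x) (σ.symm y) = σ.symm y := by
        have := congrArg σ.symm h
        rwa [Equiv.symm_apply_apply] at this
      exact max_eq_right_iff.mp this
  have hinj : Function.Injective Φ := by
    intro σ τ h
    have hord : ∀ a b : Fin n, a ≤ b ↔ τ.symm (σ a) ≤ τ.symm (σ b) := by
      intro a b
      have h1 := key σ (σ a) (σ b)
      have h2 := key τ (σ a) (σ b)
      rw [h] at h1
      simp only [Equiv.symm_apply_apply] at h1
      rw [← h1] at h2
      exact h2.symm
    have hmono : StrictMono (fun a => τ.symm (σ a)) := by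
      intro a b hab
      have hle : τ.symm (σ a) ≤ τ.symm (σ b) := (hord a b).mp hab.le
      have hne : τ.symm (σ a) ≠ τ.symm (σ b) := by
        intro he
        exact hab.ne (σ.injective (τ.symm.injective he))
      exact lt_of_le_of_ne hle hne
    have hid : (fun a => τ.symm (σ a)) = id := by
      have inst : WellFoundedLT (Fin n) := inferInstance
      refine (@StrictMono.range_inj (Fin n) (Fin n) _ _ inst _ id hmono strictMono_id).mp ?_
      rw [Set.range_id]
      exact Set.range_eq_univ.mpr (σ.trans τ.symm).surjective
    apply Equiv.ext
    intro x
    have := congrFun hid x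
    simp only [id_eq] at this
    calc σ x = τ (τ.symm (σ x)) := (τ.apply_symm_apply _).symm
    _ = τ x := by rw [this]
  have hsurj : Function.Surjective Φ := by
    rintro ⟨F, hA, hQ, hC⟩
    set r : Fin n → Fin n → Prop := fun x y => F x y = y with hr
    obtain ⟨σ, hσ⟩ := exists_perm_of_linear n r
      (fun x => by rcases hQ x x with h | h <;> exact h)
      (fun x y hxy hyx => by rw [← hyx, hC, hxy])
      (fun x y z hxy hyz => by
        show F x z = z
        calc F x z = F x (F y z) := by rw [hyz]
        _ = F (F x y) z := (hA x y z).symm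
        _ = F y z := by rw [hxy]
        _ = z := hyz)
      (fun x y => by
        rcases hQ x y with h | h
        · exact Or.inr (by show F y x = x; rw [hC, h])
        · exact Or.inl h)
    refine ⟨σ, ?_⟩
    apply Subtype.ext
    funext x y
    show σ (max (σ.symm x) (σ.symm y)) = F x y
    rcases le_total (σ.symm x) (σ.symm y) with h | h
    · rw [max_eq_right h, Equiv.apply_symm_apply]
      exact ((hσ x y).mpr h).symm
    · rw [max_eq_left h, Equiv.apply_symm_apply]
      have : F y x = x := (hσ y x).mpr h
      rw [hC]; exact this.symm
  have := Nat.card_eq_of_bijective Φ ⟨hinj, hsurj⟩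
  rw [← this, Nat.card_eq_fintype_card, Fintype.card_perm, Fintype.card_fin]
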